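/- Let G be a finite simple graph on n vertices with graph Laplacian L, let 0<α<1, let v be a vertex, and let u(t) = E_α(−t^α L)·e_v, where e_v is the standard basis vector at v. (i) If v has degree at least 1, then there exists ε_v>0 such that t ↦ u_v(t) is strictly decreasing and strictly convex on (0, ε_v). (ii) For every vertex w adjacent to v, there exists ε_w>0 such that t ↦ u_w(t) is strictly increasing and strictly concave on (0, ε_w). -/

import Mathlib

open Matrix

/-- The Mittag-Leffler matrix function `E_α(M) = ∑_{k=0}^∞ M^k/Γ(αk+1)`, defined entrywise. -/
noncomputable def mittagLefflerMatrix {n : ℕ} (α : ℝ) (M : Matrix (Fin n) (Fin n) ℝ) :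
    Matrix (Fin n) (Fin n) ℝ :=
  Matrix.of fun i j => ∑' k : ℕ, ((M ^ k) i j) / Real.Gamma (α * k + 1)

private lemma gamma_lower_bound :
    ∃ γ : ℝ, 0 < γ ∧ γ ≤ 1 ∧ ∀ x : ℝ, 1 ≤ x → γ ≤ Real.Gamma x := by
  have hcont : ContinuousOn Real.Gamma (Set.Icc 1 2) := by
    intro x hx
    have hx0 : (0 : ℝ) < x := lt_of_lt_of_le one_pos hx.1
    refine (Real.differentiableAt_Gamma ?_).continuousAt.continuousWithinAt
    intro m
    have hm : -(m : ℝ) ≤ 0 := neg_nonpos.mpr (Nat.cast_nonneg m)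
    exact ne_of_gt (lt_of_le_of_lt hm hx0)
  obtain ⟨x₀, hx₀, hmin⟩ := isCompact_Icc.exists_isMinOn ⟨1, by norm_num⟩ hcont
  refine ⟨min (Real.Gamma x₀) 1, ?_, min_le_right _ _, ?_⟩
  · have h := Real.Gamma_pos_of_pos (lt_of_lt_of_le one_pos hx₀.1)
    exact lt_min h one_pos
  · intro x hx
    rcases le_or_gt x 2 with h2 | h2
    · exact le_trans (min_le_left _ _) (hmin ⟨hx, h2⟩)
    · calc min (Real.Gamma x₀) 1 ≤ 1 := min_le_right _ _
        _ = Real.Gamma 2 := Real.Gamma_two.symm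
        _ ≤ Real.Gamma x :=
          (Real.Gamma_strictMonoOn_Ici.monotoneOn (by norm_num) (le_of_lt h2) h2.le)

private lemma key_decreasing (c : ℕ → ℝ) (B : ℝ) (hB : 1 ≤ B) (hc : ∀ k, |c k| ≤ B ^ k)
    {α : ℝ} (hα0 : 0 < α) (hα1 : α < 1) (hc1 : c 1 < 0) :
    ∃ ε > (0 : ℝ),
      StrictAntiOn (fun t : ℝ => ∑' k : ℕ, c k * (t ^ α) ^ k) (Set.Ioo 0 ε) ∧
      StrictConvexOn ℝ (Set.Ioo 0 ε) (fun t : ℝ => ∑' k : ℕ, c k * (t ^ α) ^ k) := by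
  have hB0 : (0 : ℝ) < B := lt_of_lt_of_le one_pos hB
  set p := FormalMultilinearSeries.ofScalars ℝ c with hp
  have hrad : 0 < p.radius := by
    have hle : ((Real.toNNReal B⁻¹ : NNReal) : ENNReal) ≤ p.radius := by
      apply p.le_radius_of_bound 1
      intro k
      rw [hp, FormalMultilinearSeries.ofScalars_norm]
      have h1 : ‖c k‖ ≤ B ^ k := by simpa [Real.norm_eq_abs] using hc k
      have h2 : ((Real.toNNReal B⁻¹ : NNReal) : ℝ) = B⁻¹ := Real.coe_toNNReal _ (by positivity)
      rw [h2]
      calc ‖c k‖ * (B⁻¹) ^ k ≤ B ^ k * (B⁻¹) ^ k :=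
            mul_le_mul_of_nonneg_right h1 (by positivity)
        _ = 1 := by rw [← mul_pow, mul_inv_cancel₀ hB0.ne', one_pow]
    refine lt_of_lt_of_le ?_ hle
    exact_mod_cast Real.toNNReal_pos.mpr (by positivity : (0:ℝ) < B⁻¹)
  set g := p.sum with hgdef
  have hgb : HasFPowerSeriesOnBall g p 0 p.radius := p.hasFPowerSeriesOnBall hrad
  have hga : HasFPowerSeriesAt g p 0 := hgb.hasFPowerSeriesAt
  set g1 := deriv g with hg1
  set g2 := deriv g1 with hg2
  have hg10 : g1 0 = c 1 := by
    rw [hg1, hga.deriv, hp]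
    have := FormalMultilinearSeries.ofScalars_apply_eq (c := c) (1 : ℝ) 1
    simpa using this
  obtain ⟨r, hr0, hball⟩ :=
    Metric.eventually_nhds_iff_ball.mp (hga.analyticAt.eventually_analyticAt)
  have hOn : AnalyticOnNhd ℝ g (Metric.ball 0 r) := fun y hy => hball y hy
  have h1On : AnalyticOnNhd ℝ g1 (Metric.ball 0 r) := hOn.deriv
  have h2On : AnalyticOnNhd ℝ g2 (Metric.ball 0 r) := h1On.deriv
  set Φ : ℝ → ℝ := fun s => α * (α - 1) * g1 s + α * α * (s * g2 s) with hΦ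
  have hg1c : ContinuousAt g1 0 := (h1On 0 (Metric.mem_ball_self hr0)).continuousAt
  have hg2c : ContinuousAt g2 0 := (h2On 0 (Metric.mem_ball_self hr0)).continuousAt
  have hΦc : ContinuousAt Φ 0 :=
    (continuousAt_const.mul hg1c).add (continuousAt_const.mul (continuousAt_id.mul hg2c))
  have hΦ0 : 0 < Φ 0 := by
    have hΦ0eq : Φ 0 = α * (α - 1) * c 1 := by simp [hΦ, hg10]
    rw [hΦ0eq]
    have h1 : α * (α - 1) < 0 := mul_neg_of_pos_of_neg hα0 (by linarith)
    exact mul_pos_of_neg_of_neg h1 hc1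
  have hev : ∀ᶠ s in nhds (0 : ℝ), 0 < Φ s ∧ g1 s < 0 := by
    have e1 : ∀ᶠ s in nhds (0 : ℝ), 0 < Φ s := hΦc.eventually (eventually_gt_nhds hΦ0)
    have e2 : ∀ᶠ s in nhds (0 : ℝ), g1 s < 0 :=
      hg1c.eventually (eventually_lt_nhds (show g1 0 < 0 by rw [hg10]; exact hc1))
    exact e1.and e2
  obtain ⟨δ, hδ0, hδ⟩ := Metric.eventually_nhds_iff_ball.mp hev
  set ρ := min r δ with hρ
  have hρ0 : 0 < ρ := lt_min hr0 hδ0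
  set ε := ρ ^ α⁻¹ with hε
  have hε0 : 0 < ε := Real.rpow_pos_of_pos hρ0 _
  have hmem : ∀ t ∈ Set.Ioo (0 : ℝ) ε, t ^ α ∈ Metric.ball (0 : ℝ) ρ := by
    intro t ht
    have h1 : t ^ α < ε ^ α := Real.rpow_lt_rpow ht.1.le ht.2 hα0
    have h2 : ε ^ α = ρ := Real.rpow_inv_rpow hρ0.le hα0.ne'
    rw [Metric.mem_ball, Real.dist_eq, sub_zero, abs_of_pos (Real.rpow_pos_of_pos ht.1 _)]
    rw [← h2]; exact h1
  have hmemr : ∀ t ∈ Set.Ioo (0 : ℝ) ε, t ^ α ∈ Metric.ball (0 : ℝ) r := fun t ht =>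
    Metric.ball_subset_ball (min_le_left _ _) (hmem t ht)
  have hmemδ : ∀ t ∈ Set.Ioo (0 : ℝ) ε, 0 < Φ (t ^ α) ∧ g1 (t ^ α) < 0 := fun t ht =>
    hδ _ (Metric.ball_subset_ball (min_le_right _ _) (hmem t ht))
  have hfeq : (fun t : ℝ => ∑' k : ℕ, c k * (t ^ α) ^ k) = fun t => g (t ^ α) := by
    funext t
    have hsum : g (t ^ α) = ∑' k : ℕ, p k fun _ => t ^ α := rfl
    rw [hsum]
    refine tsum_congr fun k => ?_
    rw [hp, FormalMultilinearSeries.ofScalars_apply_eq, smul_eq_mul]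
  have hder : ∀ t ∈ Set.Ioo (0 : ℝ) ε,
      HasDerivAt (fun t : ℝ => g (t ^ α)) (g1 (t ^ α) * (α * t ^ (α - 1))) t := by
    intro t ht
    have h1 : HasDerivAt (fun s : ℝ => s ^ α) (α * t ^ (α - 1)) t :=
      Real.hasDerivAt_rpow_const (Or.inl ht.1.ne')
    have h2 : HasDerivAt g (g1 (t ^ α)) (t ^ α) :=
      (hOn _ (hmemr t ht)).differentiableAt.hasDerivAt
    exact h2.comp t h1
  have hcont : ContinuousOn (fun t : ℝ => g (t ^ α)) (Set.Ioo 0 ε) :=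
    fun t ht => ((hder t ht).continuousAt).continuousWithinAt
  have hderiv_eq : ∀ t ∈ Set.Ioo (0 : ℝ) ε,
      deriv (fun t : ℝ => g (t ^ α)) t = g1 (t ^ α) * (α * t ^ (α - 1)) :=
    fun t ht => (hder t ht).deriv
  have hanti : StrictAntiOn (fun t : ℝ => g (t ^ α)) (Set.Ioo 0 ε) := by
    apply strictAntiOn_of_deriv_neg (convex_Ioo 0 ε) hcont
    intro t ht
    rw [interior_Ioo] at ht
    rw [hderiv_eq t ht]
    exact mul_neg_of_neg_of_pos (hmemδ t ht).2 (mul_pos hα0 (Real.rpow_pos_of_pos ht.1 _))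
  have hd2 : ∀ t ∈ Set.Ioo (0 : ℝ) ε, 0 < deriv^[2] (fun t : ℝ => g (t ^ α)) t := by
    intro t ht
    have hevq : (deriv (fun t : ℝ => g (t ^ α)))
        =ᶠ[nhds t] (fun s : ℝ => g1 (s ^ α) * (α * s ^ (α - 1))) := by
      filter_upwards [isOpen_Ioo.mem_nhds ht] with s hs
      exact hderiv_eq s hs
    have hF1 : HasDerivAt (fun s : ℝ => g1 (s ^ α) * (α * s ^ (α - 1)))
        ((g2 (t ^ α) * (α * t ^ (α - 1))) * (α * t ^ (α - 1))
          + g1 (t ^ α) * (α * ((α - 1) * t ^ (α - 1 - 1)))) t := by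
      have h1 : HasDerivAt (fun s : ℝ => s ^ α) (α * t ^ (α - 1)) t :=
        Real.hasDerivAt_rpow_const (Or.inl ht.1.ne')
      have h2 : HasDerivAt g1 (g2 (t ^ α)) (t ^ α) :=
        (h1On _ (hmemr t ht)).differentiableAt.hasDerivAt
      have h3 : HasDerivAt (fun s : ℝ => g1 (s ^ α)) (g2 (t ^ α) * (α * t ^ (α - 1))) t := by
        have := h2.comp t h1; exact this
      have h4 : HasDerivAt (fun s : ℝ => s ^ (α - 1)) ((α - 1) * t ^ (α - 1 - 1)) t :=
        Real.hasDerivAt_rpow_const (Or.inl ht.1.ne')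
      exact h3.mul (h4.const_mul α)
    have hkey : deriv^[2] (fun t : ℝ => g (t ^ α)) t
        = (g2 (t ^ α) * (α * t ^ (α - 1))) * (α * t ^ (α - 1))
          + g1 (t ^ α) * (α * ((α - 1) * t ^ (α - 1 - 1))) := by
      have hit : deriv^[2] (fun t : ℝ => g (t ^ α)) t
          = deriv (deriv (fun t : ℝ => g (t ^ α))) t := by
        simp [Function.iterate_succ_apply', Function.iterate_one]
      rw [hit, hevq.deriv_eq]
      exact hF1.deriv
    rw [hkey]
    have e1 : t ^ (α - 1) * t ^ (α - 1) = t ^ (α - 2) * t ^ α := by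
      rw [← Real.rpow_add ht.1, ← Real.rpow_add ht.1]
      congr 1; ring
    have e2 : t ^ (α - 1 - 1) = t ^ (α - 2) := by congr 1; ring
    rw [e2]
    have heq : (g2 (t ^ α) * (α * t ^ (α - 1))) * (α * t ^ (α - 1))
          + g1 (t ^ α) * (α * ((α - 1) * t ^ (α - 2))) = t ^ (α - 2) * Φ (t ^ α) := by
      rw [hΦ]
      linear_combination (α * α * g2 (t ^ α)) * e1
    rw [heq]
    exact mul_pos (Real.rpow_pos_of_pos ht.1 _) (hmemδ t ht).1
  have hconv : StrictConvexOn ℝ (Set.Ioo 0 ε) (fun t : ℝ => g (t ^ α)) := by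
    apply strictConvexOn_of_deriv2_pos (convex_Ioo 0 ε) hcont
    intro t ht
    rw [interior_Ioo] at ht
    exact hd2 t ht
  refine ⟨ε, hε0, ?_, ?_⟩ <;> rw [hfeq]
  · exact hanti
  · exact hconv

private lemma key_increasing (c : ℕ → ℝ) (B : ℝ) (hB : 1 ≤ B) (hc : ∀ k, |c k| ≤ B ^ k)
    {α : ℝ} (hα0 : 0 < α) (hα1 : α < 1) (hc1 : 0 < c 1) :
    ∃ ε > (0 : ℝ),
      StrictMonoOn (fun t : ℝ => ∑' k : ℕ, c k * (t ^ α) ^ k) (Set.Ioo 0 ε) ∧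
      StrictConcaveOn ℝ (Set.Ioo 0 ε) (fun t : ℝ => ∑' k : ℕ, c k * (t ^ α) ^ k) := by
  obtain ⟨ε, hε0, hanti, hconv⟩ := key_decreasing (fun k => -c k) B hB
      (fun k => by simpa using hc k) hα0 hα1 (by simpa using hc1)
  have hfe : (fun t : ℝ => ∑' k : ℕ, (-c k) * (t ^ α) ^ k)
      = fun t : ℝ => -(∑' k : ℕ, c k * (t ^ α) ^ k) := by
    funext t
    rw [← tsum_neg]
    exact tsum_congr fun k => by ring
  rw [hfe] at hanti hconv
  refine ⟨ε, hε0, ?_, ?_⟩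
  · intro x hx y hy hxy
    exact neg_lt_neg_iff.mp (hanti hx hy hxy)
  · have h2 := hconv.neg
    have : (-fun t : ℝ => -(∑' k : ℕ, c k * (t ^ α) ^ k))
        = fun t : ℝ => ∑' k : ℕ, c k * (t ^ α) ^ k := by
      funext t; simp
    rwa [this] at h2

/-- Local convexity/concavity of fractional diffusion `u(t) = E_α(−t^α L) e_v`: at the source
vertex `v` (of degree ≥ 1) the profile is strictly decreasing and strictly convex on some
`(0, ε_v)`; at each neighbor `w` of `v` it is strictly increasing and strictly concave on some
`(0, ε_w)`. -/
theorem fractional_diffusion_local_convexity_concavity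
    (n : ℕ) (G : SimpleGraph (Fin n)) [DecidableRel G.Adj]
    (α : ℝ) (hα0 : 0 < α) (hα1 : α < 1) (v : Fin n) :
    (1 ≤ G.degree v →
      ∃ ε > (0 : ℝ),
        StrictAntiOn
          (fun t : ℝ => (mittagLefflerMatrix α (-(t ^ α) • G.lapMatrix ℝ) *ᵥ
            Pi.single v 1) v) (Set.Ioo 0 ε) ∧
        StrictConvexOn ℝ (Set.Ioo 0 ε)
          (fun t : ℝ => (mittagLefflerMatrix α (-(t ^ α) • G.lapMatrix ℝ) *ᵥ
            Pi.single v 1) v)) ∧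
    (∀ w : Fin n, G.Adj v w →
      ∃ ε > (0 : ℝ),
        StrictMonoOn
          (fun t : ℝ => (mittagLefflerMatrix α (-(t ^ α) • G.lapMatrix ℝ) *ᵥ
            Pi.single v 1) w) (Set.Ioo 0 ε) ∧
        StrictConcaveOn ℝ (Set.Ioo 0 ε)
          (fun t : ℝ => (mittagLefflerMatrix α (-(t ^ α) • G.lapMatrix ℝ) *ᵥ
            Pi.single v 1) w)) := by
  classical
  have hn : 0 < n := v.pos
  have hn1 : (1 : ℝ) ≤ n := by exact_mod_cast hn
  set L := G.lapMatrix ℝ with hLdef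
  obtain ⟨γ, hγ0, hγ1, hγ⟩ := gamma_lower_bound
  -- entrywise formula for L
  have hLentry : ∀ i j, L i j = (if i = j then (G.degree i : ℝ) else 0)
      - (if G.Adj i j then 1 else 0) := by
    intro i j
    rw [hLdef]
    simp [SimpleGraph.lapMatrix, SimpleGraph.degMatrix, Matrix.diagonal_apply,
      Matrix.sub_apply]
  have hdeg_le : ∀ i : Fin n, (G.degree i : ℝ) ≤ n := by
    intro i
    have : G.degree i ≤ n := by
      calc G.degree i = (G.neighborFinset i).card := rfl
        _ ≤ Fintype.card (Fin n) := Finset.card_le_univ _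
        _ = n := Fintype.card_fin n
    exact_mod_cast this
  have hentry : ∀ i j, |L i j| ≤ (n : ℝ) := by
    intro i j
    rw [hLentry i j]
    by_cases hij : i = j
    · subst hij
      simp only [if_pos rfl, SimpleGraph.irrefl, if_false, sub_zero]
      rw [abs_of_nonneg (by positivity)]
      exact hdeg_le i
    · simp only [if_neg hij, zero_sub, abs_neg]
      split
      · simpa using hn1
      · simpa using le_trans zero_le_one hn1
  have hpow : ∀ (k : ℕ) (i j : Fin n), |(L ^ k) i j| ≤ ((n : ℝ) * n) ^ k := by
    intro k
    induction k with
    | zero =>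
      intro i j
      simp only [pow_zero, Matrix.one_apply]
      split <;> simp
    | succ k ih =>
      intro i j
      rw [pow_succ, Matrix.mul_apply]
      calc |∑ l, (L ^ k) i l * L l j| ≤ ∑ l, |(L ^ k) i l * L l j| :=
            Finset.abs_sum_le_sum_abs _ _
        _ ≤ ∑ _l : Fin n, ((n : ℝ) * n) ^ k * n := by
            apply Finset.sum_le_sum
            intro l _
            rw [abs_mul]
            exact mul_le_mul (ih i l) (hentry l j) (abs_nonneg _) (by positivity)
        _ = n * (((n : ℝ) * n) ^ k * n) := by
            rw [Finset.sum_const, Finset.card_univ, Fintype.card_fin, nsmul_eq_mul]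
        _ = ((n : ℝ) * n) ^ (k + 1) := by ring
  set B : ℝ := ((n : ℝ) * n) / γ with hBdef
  have hB : 1 ≤ B := by
    rw [hBdef, le_div_iff₀ hγ0, one_mul]
    nlinarith
  have hcB : ∀ (w : Fin n) (k : ℕ),
      |((-1 : ℝ) ^ k * ((L ^ k) w v)) / Real.Gamma (α * k + 1)| ≤ B ^ k := by
    intro w k
    have hone : (1 : ℝ) ≤ α * k + 1 := le_add_of_nonneg_left (by positivity)
    have hΓ : γ ≤ Real.Gamma (α * k + 1) := hγ _ hone
    have hΓ0 : 0 < Real.Gamma (α * k + 1) := lt_of_lt_of_le hγ0 hΓ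
    rw [abs_div, abs_mul, abs_pow, abs_neg, abs_one, one_pow, one_mul, abs_of_pos hΓ0]
    cases k with
    | zero =>
      simp only [pow_zero, Nat.cast_zero, mul_zero, zero_add, Real.Gamma_one, div_one,
        Matrix.one_apply]
      split <;> simp
    | succ m =>
      calc |(L ^ (m + 1)) w v| / Real.Gamma (α * (m + 1 : ℕ) + 1)
          ≤ ((n : ℝ) * n) ^ (m + 1) / γ ^ (m + 1) := by
            apply div_le_div₀ (by positivity) (hpow _ _ _) (by positivity)
            calc γ ^ (m + 1) ≤ γ ^ 1 :=
                  pow_le_pow_of_le_one hγ0.le hγ1 (by omega)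
              _ = γ := pow_one γ
              _ ≤ _ := hΓ
        _ = B ^ (m + 1) := by rw [hBdef, div_pow]
  have hfun : ∀ (w : Fin n) (t : ℝ),
      (mittagLefflerMatrix α (-(t ^ α) • L) *ᵥ Pi.single v 1) w
        = ∑' k : ℕ, (((-1 : ℝ) ^ k * ((L ^ k) w v)) / Real.Gamma (α * k + 1)) * (t ^ α) ^ k := by
    intro w t
    simp only [Matrix.mulVec_single, mul_one, MulOpposite.op_one, one_smul, Matrix.col_apply,
      mittagLefflerMatrix, Matrix.of_apply]
    refine tsum_congr fun k => ?_
    rw [smul_pow, Matrix.smul_apply, smul_eq_mul, neg_pow]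
    ring
  constructor
  · -- source vertex
    intro hdeg
    have hLvv : L v v = (G.degree v : ℝ) := by
      rw [hLentry v v]
      simp [SimpleGraph.irrefl]
    set c : ℕ → ℝ := fun k => ((-1 : ℝ) ^ k * ((L ^ k) v v)) / Real.Gamma (α * k + 1) with hcdef
    have hc1 : c 1 < 0 := by
      have hΓ : 0 < Real.Gamma (α * (1 : ℕ) + 1) :=
        Real.Gamma_pos_of_pos (by push_cast; linarith)
      have hd1 : (1 : ℝ) ≤ (G.degree v : ℝ) := by exact_mod_cast hdeg
      rw [hcdef]
      simp only [pow_one, pow_one (L), hLvv]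
      apply div_neg_of_neg_of_pos _ hΓ
      nlinarith
    obtain ⟨ε, hε0, h1, h2⟩ := key_decreasing c B hB (hcB v) hα0 hα1 hc1
    have hfeq : (fun t : ℝ => (mittagLefflerMatrix α (-(t ^ α) • L) *ᵥ Pi.single v 1) v)
        = fun t : ℝ => ∑' k : ℕ, c k * (t ^ α) ^ k := funext fun t => hfun v t
    exact ⟨ε, hε0, hfeq ▸ h1, hfeq ▸ h2⟩
  · -- neighbors
    intro w hadj
    have hne : w ≠ v := (G.ne_of_adj hadj).symm
    have hLwv : L w v = -1 := by
      rw [hLentry w v]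
      simp [hne, hadj.symm]
    set c : ℕ → ℝ := fun k => ((-1 : ℝ) ^ k * ((L ^ k) w v)) / Real.Gamma (α * k + 1) with hcdef
    have hc1 : 0 < c 1 := by
      have hΓ : 0 < Real.Gamma (α * (1 : ℕ) + 1) :=
        Real.Gamma_pos_of_pos (by push_cast; linarith)
      rw [hcdef]
      simp only [pow_one, pow_one (L), hLwv]
      apply div_pos _ hΓ
      norm_num
    obtain ⟨ε, hε0, h1, h2⟩ := key_increasing c B hB (hcB w) hα0 hα1 hc1
    have hfeq : (fun t : ℝ => (mittagLefflerMatrix α (-(t ^ α) • L) *ᵥ Pi.single v 1) w)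
        = fun t : ℝ => ∑' k : ℕ, c k * (t ^ α) ^ k := funext fun t => hfun w t
    exact ⟨ε, hε0, hfeq ▸ h1, hfeq ▸ h2⟩
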